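/- Let X be a subspace of R^N with orthonormal basis U, and let X1, X2 be mutually orthogonal subspaces of X. Suppose Φ ∈ R^{n×N} satisfies 1 − δ < s_min(ΦU)^2 ≤ s_max(ΦU)^2 < 1 + δ with δ ∈ (0,1/4). Let Y2 = ΦX2 and let P_{Y2} denote the orthogonal projection onto Y2. Then for every u ∈ X1, ||P_{Y2} Φ u|| ≤ sqrt(4/3) · δ · ||u||. -/

import Mathlib

noncomputable section
open scoped RealInnerProductSpace Matrix

/-- The `j`-th column of a matrix, as a vector in Euclidean space. -/
def col {m k : ℕ} (A : Matrix (Fin m) (Fin k) ℝ) (j : Fin k) : EuclideanSpace ℝ (Fin m) :=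
  WithLp.toLp 2 (fun i => A i j)

/-- Orthogonal projection onto a subspace, as an endomorphism. -/
def projE {m : ℕ} (K : Submodule ℝ (EuclideanSpace ℝ (Fin m))) :
    EuclideanSpace ℝ (Fin m) →ₗ[ℝ] EuclideanSpace ℝ (Fin m) :=
  K.subtype ∘ₗ K.orthogonalProjectionOnto.toLinearMap

/-- Frobenius norm of a real matrix. -/
def frob {m k : ℕ} (A : Matrix (Fin m) (Fin k) ℝ) : ℝ :=
  Real.sqrt (∑ i, ∑ j, (A i j) ^ 2)

/-- Operator (spectral) norm of a real matrix, w.r.t. Euclidean norms. -/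
def opn {m k : ℕ} (A : Matrix (Fin m) (Fin k) ℝ) : ℝ :=
  ‖LinearMap.toContinuousLinearMap (Matrix.toEuclideanLin A)‖

lemma toEuclideanLin_eq_sum {N d : ℕ} (U : Matrix (Fin N) (Fin d) ℝ)
    (c : EuclideanSpace ℝ (Fin d)) :
    Matrix.toEuclideanLin U c = ∑ j, c j • col U j := by
  ext i
  have h : (∑ j, c j • col U j) i = ∑ j, (c j • col U j) i :=
    by simp [WithLp.ofLp_sum]
  rw [h]
  simp [Matrix.toEuclideanLin_apply, Matrix.mulVec, dotProduct, col, mul_comm]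

lemma norm_toEuclideanLin_of_orthonormal {N d : ℕ} {U : Matrix (Fin N) (Fin d) ℝ}
    (hU : Orthonormal ℝ (col U)) (c : EuclideanSpace ℝ (Fin d)) :
    ‖Matrix.toEuclideanLin U c‖ = ‖c‖ := by
  have h1 : ⟪Matrix.toEuclideanLin U c, Matrix.toEuclideanLin U c⟫ = ∑ j, c j * c j := by
    rw [toEuclideanLin_eq_sum]
    simpa using hU.inner_sum c c Finset.univ
  have h2 : ⟪c, c⟫ = ∑ j, c j * c j := by
    simp only [PiLp.inner_apply, RCLike.inner_apply, conj_trivial]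
  rw [norm_eq_sqrt_real_inner, norm_eq_sqrt_real_inner c, h1, h2]

lemma mem_range_of_mem_span {N d : ℕ} (U : Matrix (Fin N) (Fin d) ℝ)
    (X : Submodule ℝ (EuclideanSpace ℝ (Fin N)))
    (hs : Submodule.span ℝ (Set.range (col U)) = X)
    {x : EuclideanSpace ℝ (Fin N)} (hx : x ∈ X) :
    ∃ c : EuclideanSpace ℝ (Fin d), Matrix.toEuclideanLin U c = x := by
  have hsub : Set.range (col U) ⊆ ↑(LinearMap.range (Matrix.toEuclideanLin U)) := by
    rintro _ ⟨j, rfl⟩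
    refine ⟨EuclideanSpace.single j 1, ?_⟩
    ext i
    show (U *ᵥ Pi.single j 1) i = U i j
    rw [Matrix.mulVec_single]
    exact mul_one _
  have := (Submodule.span_le.mpr hsub)
  rw [hs] at this
  exact this hx

set_option maxHeartbeats 1000000 in
/-- For orthogonal subspaces `X1 ⊥ X2` of `X` on which `Φ` is a near-isometry with
`δ ∈ (0,1/4)`, the projection of `Φu` onto `Y2 = ΦX2` is small: `‖P_{Y2}Φu‖ ≤ √(4/3)·δ·‖u‖`. -/
theorem proj_image_orthogonal_le {N n d : ℕ} (δ : ℝ) (hδ : δ ∈ Set.Ioo (0 : ℝ) (1/4))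
    (X X1 X2 : Submodule ℝ (EuclideanSpace ℝ (Fin N)))
    (hX1 : X1 ≤ X) (hX2 : X2 ≤ X)
    (horth : ∀ u ∈ X1, ∀ v ∈ X2, ⟪u, v⟫ = 0)
    (U : Matrix (Fin N) (Fin d) ℝ)
    (hU : Orthonormal ℝ (col U)) (hs : Submodule.span ℝ (Set.range (col U)) = X)
    (Φ : Matrix (Fin n) (Fin N) ℝ)
    (hiso : ∀ x : EuclideanSpace ℝ (Fin d), ‖x‖ = 1 →
      1 - δ < ‖Matrix.toEuclideanLin (Φ * U) x‖ ^ 2 ∧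
      ‖Matrix.toEuclideanLin (Φ * U) x‖ ^ 2 < 1 + δ) :
    ∀ u ∈ X1,
      ‖projE (X2.map (Matrix.toEuclideanLin Φ)) (Matrix.toEuclideanLin Φ u)‖
        ≤ Real.sqrt (4/3) * δ * ‖u‖ := by
  obtain ⟨hδ0, hδ4⟩ := hδ
  set T := Matrix.toEuclideanLin Φ with hT
  -- Step 1: near isometry on all of X (non-strict)
  have key : ∀ x ∈ X, (1 - δ) * ‖x‖ ^ 2 ≤ ‖T x‖ ^ 2 ∧ ‖T x‖ ^ 2 ≤ (1 + δ) * ‖x‖ ^ 2 := by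
    intro x hx
    obtain ⟨c, rfl⟩ := mem_range_of_mem_span U X hs hx
    have hcomp : ∀ c' : EuclideanSpace ℝ (Fin d),
        Matrix.toEuclideanLin (Φ * U) c' = T (Matrix.toEuclideanLin U c') := by
      intro c'; simp [hT, Matrix.toEuclideanLin_apply, Matrix.mulVec_mulVec]
    have hnc : ‖Matrix.toEuclideanLin U c‖ = ‖c‖ := norm_toEuclideanLin_of_orthonormal hU c
    rcases eq_or_ne c 0 with rfl | hc0
    · simp
    · have hcn : (0:ℝ) < ‖c‖ := norm_pos_iff.mpr hc0
      set e : EuclideanSpace ℝ (Fin d) := ‖c‖⁻¹ • c with he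
      have hne : ‖e‖ = 1 := by
        rw [he, norm_smul, norm_inv, norm_norm, inv_mul_cancel₀ hcn.ne']
      obtain ⟨h1, h2⟩ := hiso e hne
      have hsmul : Matrix.toEuclideanLin (Φ * U) c
          = ‖c‖ • Matrix.toEuclideanLin (Φ * U) e := by
        rw [he, map_smul, smul_smul, mul_inv_cancel₀ hcn.ne', one_smul]
      have hnorm : ‖T (Matrix.toEuclideanLin U c)‖ ^ 2
          = ‖c‖ ^ 2 * ‖Matrix.toEuclideanLin (Φ * U) e‖ ^ 2 := by
        rw [← hcomp, hsmul, norm_smul, norm_norm, mul_pow]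
      constructor
      · rw [hnorm, hnc]; nlinarith [sq_nonneg ‖c‖]
      · rw [hnorm, hnc]; nlinarith [sq_nonneg ‖c‖]
  -- Step 2: inner product bound for orthogonal unit vectors, then general
  have inner_bd : ∀ u ∈ X1, ∀ v ∈ X2, ⟪T u, T v⟫ ≤ δ * ‖u‖ * ‖v‖ := by
    intro u hu v hv
    rcases eq_or_ne u 0 with rfl | hu0
    · simp [hδ0.le, mul_nonneg, norm_nonneg]
    rcases eq_or_ne v 0 with rfl | hv0
    · simp [hδ0.le, mul_nonneg, norm_nonneg]
    have hun : (0:ℝ) < ‖u‖ := norm_pos_iff.mpr hu0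
    have hvn : (0:ℝ) < ‖v‖ := norm_pos_iff.mpr hv0
    set a := ‖u‖⁻¹ • u with ha
    set b := ‖v‖⁻¹ • v with hb
    have haX1 : a ∈ X1 := X1.smul_mem _ hu
    have hbX2 : b ∈ X2 := X2.smul_mem _ hv
    have hna : ‖a‖ = 1 := by rw [ha, norm_smul, norm_inv, norm_norm, inv_mul_cancel₀ hun.ne']
    have hnb : ‖b‖ = 1 := by rw [hb, norm_smul, norm_inv, norm_norm, inv_mul_cancel₀ hvn.ne']
    have hab : ⟪a, b⟫ = 0 := horth a haX1 b hbX2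
    have hadd : ‖a + b‖ ^ 2 = 2 := by
      rw [norm_add_sq_real, hab, hna, hnb]; ring
    have hsub : ‖a - b‖ ^ 2 = 2 := by
      rw [norm_sub_sq_real, hab, hna, hnb]; ring
    have hmem_add : a + b ∈ X := X.add_mem (hX1 haX1) (hX2 hbX2)
    have hmem_sub : a - b ∈ X := X.sub_mem (hX1 haX1) (hX2 hbX2)
    have h1 : ‖T (a + b)‖ ^ 2 ≤ (1 + δ) * ‖a + b‖ ^ 2 := (key _ hmem_add).2
    have h2 : (1 - δ) * ‖a - b‖ ^ 2 ≤ ‖T (a - b)‖ ^ 2 := (key _ hmem_sub).1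
    have hpol : ⟪T a, T b⟫ = (‖T a + T b‖ ^ 2 - ‖T a - T b‖ ^ 2) / 4 := by
      have e1 := norm_add_sq_real (T a) (T b)
      have e2 := norm_sub_sq_real (T a) (T b)
      linarith
    have hTab : T (a + b) = T a + T b := map_add T a b
    have hTab' : T (a - b) = T a - T b := map_sub T a b
    have hab_le : ⟪T a, T b⟫ ≤ δ := by
      rw [hpol]
      rw [hTab] at h1; rw [hTab'] at h2
      rw [hadd] at h1; rw [hsub] at h2
      linarith
    have hscale : ⟪T u, T v⟫ = ‖u‖ * ‖v‖ * ⟪T a, T b⟫ := by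
      have hu' : T u = ‖u‖ • T a := by
        rw [ha, map_smul, smul_smul, mul_inv_cancel₀ hun.ne', one_smul]
      have hv' : T v = ‖v‖ • T b := by
        rw [hb, map_smul, smul_smul, mul_inv_cancel₀ hvn.ne', one_smul]
      rw [hu', hv', real_inner_smul_left, real_inner_smul_right]; ring
    rw [hscale]
    calc ‖u‖ * ‖v‖ * ⟪T a, T b⟫ ≤ ‖u‖ * ‖v‖ * δ := by
          exact mul_le_mul_of_nonneg_left hab_le (by positivity)
      _ = δ * ‖u‖ * ‖v‖ := by ring
  -- Step 3: conclude
  intro u hu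
  set Y2 := X2.map T with hY2
  set w : EuclideanSpace ℝ (Fin n) := projE Y2 (T u) with hw
  have hwY2 : w ∈ Y2 := (Y2.orthogonalProjectionOnto (T u)).2
  obtain ⟨v, hvX2, hvw⟩ := hwY2
  -- inner (T u) w = ‖w‖^2
  have horthw : ⟪w, T u - w⟫ = 0 :=
    Y2.sub_starProjection_mem_orthogonal (T u) w
      (Y2.orthogonalProjectionOnto (T u)).2
  have hinner : ⟪T u, w⟫ = ‖w‖ ^ 2 := by
    have h1 : ⟪w, T u⟫ - ⟪w, w⟫ = 0 := by rw [← inner_sub_right]; exact horthw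
    have h2 : ⟪w, w⟫ = ‖w‖ ^ 2 := real_inner_self_eq_norm_sq w
    have h3 : ⟪T u, w⟫ = ⟪w, T u⟫ := real_inner_comm _ _
    linarith
  have hb1 : ‖w‖ ^ 2 ≤ δ * ‖u‖ * ‖v‖ := by
    rw [← hinner, ← hvw]
    exact inner_bd u hu v hvX2
  have hb2 : (1 - δ) * ‖v‖ ^ 2 ≤ ‖w‖ ^ 2 := by
    rw [← hvw]
    exact (key v (hX2 hvX2)).1
  set s := Real.sqrt (4/3) with hsdef
  have hs0 : (0:ℝ) ≤ s := Real.sqrt_nonneg _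
  have hs2 : s ^ 2 = 4/3 := Real.sq_sqrt (by norm_num)
  have hv_le : ‖v‖ ≤ s * ‖w‖ := by
    have hsq : ‖v‖ ^ 2 ≤ (s * ‖w‖) ^ 2 := by
      rw [mul_pow, hs2]
      nlinarith [sq_nonneg ‖v‖]
    exact (pow_le_pow_iff_left₀ (norm_nonneg v) (by positivity) two_ne_zero).mp hsq
  rcases eq_or_lt_of_le (norm_nonneg w) with hw0 | hw0
  · rw [← hw0]; positivity
  · have : ‖w‖ ^ 2 ≤ δ * ‖u‖ * (s * ‖w‖) := by
      calc ‖w‖ ^ 2 ≤ δ * ‖u‖ * ‖v‖ := hb1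
        _ ≤ δ * ‖u‖ * (s * ‖w‖) := by
            exact mul_le_mul_of_nonneg_left hv_le (by positivity)
    have hfin : ‖w‖ ≤ s * δ * ‖u‖ := by
      have h := mul_le_mul_of_nonneg_right (le_refl ‖w‖) hw0.le
      nlinarith
    exact hfin
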